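/- arXiv:1805.04898 — 2 statements merged into one kernel-verified Lean document; each statement's English description precedes it below -/
import Mathlib

section
/- Under Assumptions Q1, A1-i and A1-ii: (a) the map (x, π) ↦ H(x)[π] is lower semicontinuous on Δ^𝒜 × ℝ^𝒜; (b) H(x)[π] ≤ 0 for all x ∈ Δ^𝒜 and π ∈ ℝ^𝒜; (c) H(x)[π] = 0 if and only if every a ∈ 𝒜 with x_a > 0 satisfies π_a = max_{b∈𝒜} π_b. -/
open MeasureTheory Finset
open scoped Classical

/-- The maximal payoff among actions in `S`. -/
noncomputable def piStar {A : Type*} (π : A → ℝ) (S : Finset A) : ℝ :=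
  if h : S.Nonempty then S.sup' h π else 0

/-- `Q(q) = μ_Q((-∞, q])`. -/
noncomputable def Qfun (μQ : Measure ℝ) (q : ℝ) : ℝ := (μQ (Set.Iic q)).toReal

/-- The individual ex-ante first-order net gain `g_{a*}[π]`. -/
noncomputable def gain {A : Type*} [Fintype A] [DecidableEq A]
    (P : A → Finset A → ℝ) (μQ : Measure ℝ) (π : A → ℝ) (a : A) : ℝ :=
  ∑ A' ∈ (Finset.univ.erase a).powerset,
    P a A' * ∫ q, max (piStar π A' - π a - q) 0 ∂μQ

/-- `g_{**}[π](S) = min_{b ∈ S} g_{b*}[π]`. -/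
noncomputable def gainMin {A : Type*} [Fintype A] [DecidableEq A]
    (P : A → Finset A → ℝ) (μQ : Measure ℝ) (π : A → ℝ) (S : Finset A) : ℝ :=
  if h : S.Nonempty then S.inf' h (fun b => gain P μQ π b) else 0

/-- The individual ex-ante second-order net gain `h_{a*}[π]`. -/
noncomputable def gain2 {A : Type*} [Fintype A] [DecidableEq A]
    (P : A → Finset A → ℝ) (μQ : Measure ℝ) (π : A → ℝ) (a : A) : ℝ :=
  ∑ A' ∈ (Finset.univ.erase a).powerset,
    P a A' * Qfun μQ (piStar π A' - π a) * (gainMin P μQ π A' - gain P μQ π a)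

/-- The aggregate second-order gain `H(x)[π] = Σ_a x_a h_{a*}[π]`. -/
noncomputable def Hagg {A : Type*} [Fintype A] [DecidableEq A]
    (P : A → Finset A → ℝ) (μQ : Measure ℝ) (x π : A → ℝ) : ℝ :=
  ∑ a : A, x a * gain2 P μQ π a


section prelim
variable (μQ : Measure ℝ) [IsProbabilityMeasure μQ]

/-- the inner integral -/
noncomputable def Fint (v : ℝ) : ℝ := ∫ q, max (v - q) 0 ∂μQ

lemma Qfun_nonneg (q : ℝ) : 0 ≤ Qfun μQ q := ENNReal.toReal_nonneg

lemma Qfun_mono {q r : ℝ} (h : q ≤ r) : Qfun μQ q ≤ Qfun μQ r :=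
  ENNReal.toReal_mono (measure_ne_top _ _) (measure_mono (Set.Iic_subset_Iic.2 h))

lemma Qfun_le_one (q : ℝ) : Qfun μQ q ≤ 1 := by
  have := measure_mono (μ := μQ) (Set.subset_univ (Set.Iic q))
  simpa [Qfun, measure_univ] using ENNReal.toReal_mono (by simp) this

lemma Fint_nonneg (v : ℝ) : 0 ≤ Fint μQ v :=
  integral_nonneg fun _q => le_max_right _ _

variable {μQ} (hQ0 : ∀ q : ℝ, q < 0 → Qfun μQ q = 0)
include hQ0

lemma mu_Iio_zero : μQ (Set.Iio (0:ℝ)) = 0 := by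
  have h : Set.Iio (0:ℝ) = ⋃ n : ℕ, Set.Iic (-(1:ℝ)/(n+1)) := by
    ext x
    simp only [Set.mem_Iio, Set.mem_iUnion, Set.mem_Iic]
    constructor
    · intro hx
      obtain ⟨n, hn⟩ := exists_nat_gt (1 / (-x))
      refine ⟨n, ?_⟩
      have hx' : 0 < -x := by linarith
      have hn' : 1 / (-x) < (n:ℝ) + 1 := by
        have : (n:ℝ) ≤ (n:ℝ)+1 := by linarith
        linarith
      have h3 := (div_lt_iff₀ hx').1 hn'
      have hpos : (0:ℝ) < (n:ℝ)+1 := by positivity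
      rw [le_div_iff₀ hpos]
      nlinarith
    · rintro ⟨n, hn⟩
      have hpos : (0:ℝ) < (n:ℝ)+1 := by positivity
      have : -(1:ℝ)/(n+1) < 0 := by
        apply div_neg_of_neg_of_pos <;> linarith
      linarith
  rw [h]
  refine le_antisymm (le_trans (measure_iUnion_le _) ?_) (zero_le)
  have : ∀ n : ℕ, μQ (Set.Iic (-(1:ℝ)/(n+1))) = 0 := by
    intro n
    have hneg : -(1:ℝ)/(n+1) < 0 := by
      apply div_neg_of_neg_of_pos
      · linarith
      · positivity
    have := hQ0 _ hneg
    simpa [Qfun, ENNReal.toReal_eq_zero_iff, measure_ne_top] using this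
  simp [this]

lemma ae_nonneg : ∀ᵐ q ∂μQ, (0:ℝ) ≤ q := by
  have := mu_Iio_zero hQ0
  rw [ae_iff]
  simp only [not_le]; exact this

lemma Fint_integrable (v : ℝ) : Integrable (fun q => max (v - q) 0) μQ := by
  refine Integrable.mono' (integrable_const (max v 0)) ?_ ?_
  · exact (((continuous_const.sub continuous_id).max continuous_const)).aestronglyMeasurable
  · filter_upwards [ae_nonneg hQ0] with q hq
    rw [Real.norm_eq_abs, abs_of_nonneg (le_max_right _ _)]
    exact max_le_max (by linarith) le_rfl

lemma Fint_mono {v w : ℝ} (h : v ≤ w) : Fint μQ v ≤ Fint μQ w := by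
  refine integral_mono (Fint_integrable hQ0 v) (Fint_integrable hQ0 w) ?_
  intro q
  exact max_le_max (by linarith) le_rfl

lemma Fint_zero {v : ℝ} (h : v ≤ 0) : Fint μQ v = 0 := by
  have hc : (fun q => max (v - q) 0) =ᵐ[μQ] (fun _ => (0:ℝ)) := by
    filter_upwards [ae_nonneg hQ0] with q hq
    simp only [max_eq_right_iff]
    linarith
  rw [Fint, integral_congr_ae hc, integral_const]
  simp

lemma Fint_pos {v : ℝ} (hv : 0 < v) (hQb : ∀ q : ℝ, 0 < q → 0 < Qfun μQ q) :
    0 < Fint μQ v := by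
  have hind : ∀ q : ℝ, Set.indicator (Set.Iic (v/2)) (fun _ => v/2) q ≤ max (v - q) 0 := by
    intro q
    by_cases hq : q ∈ Set.Iic (v/2)
    · rw [Set.indicator_of_mem hq]
      simp only [Set.mem_Iic] at hq
      exact le_max_of_le_left (by linarith)
    · rw [Set.indicator_of_notMem hq]; exact le_max_right _ _
  have hint : ∫ q, Set.indicator (Set.Iic (v/2)) (fun _ => v/2) q ∂μQ
      = (μQ (Set.Iic (v/2))).toReal * (v/2) := by
    rw [integral_indicator_const _ measurableSet_Iic]; simp [mul_comm, measureReal_def]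
  have h1 : ∫ q, Set.indicator (Set.Iic (v/2)) (fun _ => v/2) q ∂μQ ≤ Fint μQ v := by
    refine integral_mono ?_ (Fint_integrable hQ0 v) hind
    exact (integrableOn_const (by exact measure_ne_top _ _)).integrable_indicator
      measurableSet_Iic
  have h2 : 0 < (μQ (Set.Iic (v/2))).toReal * (v/2) := by
    have := hQb (v/2) (by linarith)
    exact mul_pos this (by linarith)
  rw [hint] at h1
  linarith

lemma Fint_pos_imp {v : ℝ} (h : 0 < Fint μQ v) : 0 < v := by
  by_contra hc
  rw [Fint_zero hQ0 (not_lt.1 hc)] at h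
  exact lt_irrefl _ h

lemma Fint_lipschitz : LipschitzWith 1 (Fint μQ) := by
  rw [lipschitzWith_iff_dist_le_mul]
  intro v w
  rw [Real.dist_eq, Real.dist_eq]
  norm_num
  have h : Fint μQ v - Fint μQ w = ∫ q, (max (v - q) 0 - max (w - q) 0) ∂μQ := by
    rw [integral_sub (Fint_integrable hQ0 v) (Fint_integrable hQ0 w)]; rfl
  have hb : ∀ q : ℝ, |max (v - q) 0 - max (w - q) 0| ≤ |v - w| := by
    intro q
    have := abs_max_sub_max_le_abs (v - q) (w - q) 0
    simpa using this
  calc |Fint μQ v - Fint μQ w| = |∫ q, (max (v - q) 0 - max (w - q) 0) ∂μQ| := by rw [h]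
    _ ≤ ∫ q, |max (v - q) 0 - max (w - q) 0| ∂μQ := by
        simpa [Real.norm_eq_abs] using
          norm_integral_le_integral_norm (fun q => max (v - q) 0 - max (w - q) 0) (μ := μQ)
    _ ≤ ∫ _q, |v - w| ∂μQ := by
        refine integral_mono ((Fint_integrable hQ0 v).sub (Fint_integrable hQ0 w)).abs
          (integrable_const _) hb
    _ = |v - w| := by simp

omit hQ0 in
lemma Qfun_usc : UpperSemicontinuous (Qfun μQ) := by
  intro x y hy
  have hseq : Filter.Tendsto (fun n : ℕ => μQ (Set.Iic (x + 1/(n+1)))) Filter.atTop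
      (nhds (μQ (⋂ n : ℕ, Set.Iic (x + 1/((n:ℝ)+1))))) := by
    refine tendsto_measure_iInter_atTop (fun n => (measurableSet_Iic).nullMeasurableSet) ?_ ⟨0, measure_ne_top _ _⟩
    intro m n hmn
    apply Set.Iic_subset_Iic.2
    have : (1:ℝ)/(n+1) ≤ 1/(m+1) := by
      apply one_div_le_one_div_of_le
      · positivity
      · have := (Nat.cast_le (α := ℝ)).2 hmn; linarith
    linarith
  have hInter : (⋂ n : ℕ, Set.Iic (x + 1/((n:ℝ)+1))) = Set.Iic x := by
    ext z
    simp only [Set.mem_iInter, Set.mem_Iic]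
    constructor
    · intro h
      by_contra hc
      push_neg at hc
      obtain ⟨n, hn⟩ := exists_nat_gt (1/(z - x))
      have hzx : 0 < z - x := by linarith
      have h2 : (1:ℝ)/(n+1) < z - x := by
        rw [div_lt_iff₀ (by positivity)]
        have h3 := (div_lt_iff₀ hzx).1 hn
        nlinarith
      have := h n
      linarith
    · intro h n
      have : (0:ℝ) < 1/((n:ℝ)+1) := by positivity
      linarith
  rw [hInter] at hseq
  have hy' : μQ (Set.Iic x) < ENNReal.ofReal y := by
    have h0 : 0 ≤ y := le_trans (Qfun_nonneg μQ x) hy.le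
    rw [← ENNReal.toReal_lt_toReal (measure_ne_top _ _) ENNReal.ofReal_ne_top] at *
    · rwa [ENNReal.toReal_ofReal h0]
  have := hseq.eventually_lt_const hy'
  obtain ⟨n, hn⟩ := this.exists
  have hopen : ∀ᶠ z in nhds x, z < x + 1/((n:ℝ)+1) := by
    have hlt : x < x + 1/((n:ℝ)+1) := by
      have : (0:ℝ) < 1/((n:ℝ)+1) := by positivity
      linarith
    exact Filter.Tendsto.eventually_lt_const hlt Filter.tendsto_id
  filter_upwards [hopen] with z hz
  calc Qfun μQ z ≤ Qfun μQ (x + 1/((n:ℝ)+1)) := Qfun_mono μQ hz.le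
    _ < y := by
        rw [Qfun]
        rw [← ENNReal.toReal_ofReal (le_trans (Qfun_nonneg μQ x) hy.le)]
        exact ENNReal.toReal_strict_mono ENNReal.ofReal_ne_top hn

end prelim
section layercake

lemma layercake_le {ι : Type*} (s : Finset ι) (w₁ w₂ v₁ v₂ : ι → ℝ)
    (hw₁ : ∀ i ∈ s, 0 ≤ w₁ i) (hw₂ : ∀ i ∈ s, 0 ≤ w₂ i)
    (hv₁ : ∀ i ∈ s, 0 ≤ v₁ i) (hv₂ : ∀ i ∈ s, 0 ≤ v₂ i)
    (h : ∀ t : ℝ, 0 < t →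
      ∑ i ∈ s, w₁ i * (if t ≤ v₁ i then (1:ℝ) else 0)
        ≤ ∑ i ∈ s, w₂ i * (if t ≤ v₂ i then (1:ℝ) else 0)) :
    ∑ i ∈ s, w₁ i * v₁ i ≤ ∑ i ∈ s, w₂ i * v₂ i := by
  have key : ∀ (w v : ι → ℝ), (∀ i ∈ s, 0 ≤ w i) → (∀ i ∈ s, 0 ≤ v i) →
      ∑ i ∈ s, w i * v i
        = ∫ t, (∑ i ∈ s, Set.indicator (Set.Ioc (0:ℝ) (v i)) (fun _ => w i) t) := by
    intro w v hw hv
    rw [MeasureTheory.integral_finset_sum]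
    · refine Finset.sum_congr rfl fun i hi => ?_
      rw [MeasureTheory.integral_indicator_const _ measurableSet_Ioc]
      rw [measureReal_def, Real.volume_Ioc, smul_eq_mul]
      rw [ENNReal.toReal_ofReal (by simpa using hv i hi)]
      ring
    · intro i hi
      exact (MeasureTheory.integrableOn_const
        (by rw [Real.volume_Ioc]; exact ENNReal.ofReal_ne_top)).integrable_indicator
        measurableSet_Ioc
  have hintg : ∀ (w v : ι → ℝ),
      MeasureTheory.Integrable
        (fun t => ∑ i ∈ s, Set.indicator (Set.Ioc (0:ℝ) (v i)) (fun _ => w i) t) := by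
    intro w v
    refine MeasureTheory.integrable_finset_sum _ fun i hi => ?_
    exact (MeasureTheory.integrableOn_const
      (by rw [Real.volume_Ioc]; exact ENNReal.ofReal_ne_top)).integrable_indicator
      measurableSet_Ioc
  rw [key w₁ v₁ hw₁ hv₁, key w₂ v₂ hw₂ hv₂]
  refine MeasureTheory.integral_mono (hintg w₁ v₁) (hintg w₂ v₂) fun t => ?_
  by_cases ht : 0 < t
  · have hrw : ∀ (w v : ι → ℝ), ∀ i,
        Set.indicator (Set.Ioc (0:ℝ) (v i)) (fun _ => w i) t
          = w i * (if t ≤ v i then (1:ℝ) else 0) := by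
      intro w v i
      by_cases hm : t ∈ Set.Ioc (0:ℝ) (v i)
      · rw [Set.indicator_of_mem hm, if_pos hm.2, mul_one]
      · rw [Set.indicator_of_notMem hm, if_neg, mul_zero]
        intro hle
        exact hm ⟨ht, hle⟩
    simp only [hrw]
    exact h t ht
  · have : ∀ (w v : ι → ℝ), ∀ i,
        Set.indicator (Set.Ioc (0:ℝ) (v i)) (fun _ => w i) t = 0 := by
      intro w v i
      apply Set.indicator_of_notMem
      intro hm
      exact ht hm.1
    simp [this]

end layercake

section lscHelpers

variable {X : Type*} [TopologicalSpace X]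

lemma lsc_usc_mul_nonpos {u c : X → ℝ} (hu : UpperSemicontinuous u)
    (hu0 : ∀ x, 0 ≤ u x) (hu1 : ∀ x, u x ≤ 1) (hc : Continuous c)
    (h : ∀ x, 0 < u x → c x ≤ 0) :
    LowerSemicontinuous (fun x => u x * c x) := by
  intro x₀ y hy
  replace hy : y < u x₀ * c x₀ := hy
  by_cases hc₀ : 0 ≤ c x₀
  ·
    -- If u x₀ > 0 then c x₀ ≤ 0 so c x₀ = 0, product = 0. If u x₀ = 0, product = 0.
    have hprod : u x₀ * c x₀ = 0 := by
      rcases lt_or_eq_of_le (hu0 x₀) with hpos | heq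
      · have := h x₀ hpos
        have : c x₀ = 0 := le_antisymm this hc₀
        rw [this, mul_zero]
      · rw [← heq, zero_mul]
    rw [hprod] at hy
    have hev : ∀ᶠ x in nhds x₀, y < c x :=
      (hc.continuousAt (x := x₀)).eventually_const_lt (lt_of_lt_of_le hy hc₀)
    filter_upwards [hev] with x hx
    rcases le_or_gt 0 (c x) with h1 | h1
    · calc y < 0 := hy
        _ ≤ u x * c x := mul_nonneg (hu0 x) h1
    · calc y < c x := hx
        _ ≤ u x * c x := by nlinarith [hu0 x, hu1 x]
  · push_neg at hc₀
    -- c x₀ < 0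
    have hu₀1 : u x₀ ≤ 1 := hu1 x₀
    set δ : ℝ := min (min 1 (-(c x₀)/2)) ((u x₀ * c x₀ - y)/(2*(2 + |c x₀|))) with hδ
    have hyc : y < u x₀ * c x₀ := hy
    have hδpos : 0 < δ := by
      apply lt_min
      · apply lt_min
        · norm_num
        · linarith
      · apply div_pos (by linarith) (by positivity)
    have hev1 : ∀ᶠ x in nhds x₀, u x < u x₀ + δ := hu x₀ (u x₀ + δ) (by linarith)
    have hev2 : ∀ᶠ x in nhds x₀, |c x - c x₀| < δ := by
      have := (hc.continuousAt (x := x₀)).tendsto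
      have := Metric.tendsto_nhds.1 this δ hδpos
      simpa [Real.dist_eq] using this
    filter_upwards [hev1, hev2] with x h1 h2
    have hδ1 : δ ≤ 1 := le_trans (min_le_left _ _) (min_le_left _ _)
    have hδ2 : δ ≤ -(c x₀)/2 := le_trans (min_le_left _ _) (min_le_right _ _)
    have hδ3 : δ ≤ (u x₀ * c x₀ - y)/(2*(2 + |c x₀|)) := min_le_right _ _
    have hcx : c x < 0 := by
      have := abs_lt.1 h2
      linarith
    have habs : |c x₀| = -(c x₀) := abs_of_neg hc₀
    have h4 : u x * c x ≥ (u x₀ + δ) * c x := by nlinarith [hu0 x]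
    have h5 : (u x₀ + δ) * c x ≥ (u x₀ + δ) * (c x₀ - δ) := by
      have := abs_lt.1 h2
      nlinarith [hu0 x₀]
    have h6 : (u x₀ + δ) * (c x₀ - δ) > y := by
      have hδd : δ * (2*(2 + |c x₀|)) ≤ u x₀ * c x₀ - y := by
        rw [le_div_iff₀ (by positivity)] at hδ3
        linarith
      nlinarith [hu0 x₀, abs_nonneg (c x₀)]
    linarith

end lscHelpers
section lscHelpers2

variable {X Y : Type*} [TopologicalSpace X] [TopologicalSpace Y]

lemma lsc_const_mul {f : X → ℝ} (hf : LowerSemicontinuous f) {k : ℝ} (hk : 0 ≤ k) :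
    LowerSemicontinuous (fun x => k * f x) := by
  rcases eq_or_lt_of_le hk with hk0 | hk0
  · simp only [← hk0, zero_mul]
    exact lowerSemicontinuous_const
  · intro x₀ y hy
    replace hy : y < k * f x₀ := hy
    have : y / k < f x₀ := (div_lt_iff₀' hk0).2 hy
    filter_upwards [hf x₀ (y/k) this] with x hx
    calc y = k * (y / k) := by field_simp
      _ < k * f x := by exact (mul_lt_mul_iff_right₀ hk0).2 hx

lemma lsc_comp_continuous {f : Y → ℝ} (hf : LowerSemicontinuous f) {g : X → Y}
    (hg : Continuous g) : LowerSemicontinuous (fun x => f (g x)) := by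
  intro x₀ y hy
  exact (hg.tendsto x₀).eventually (hf (g x₀) y hy)

/-- Product of a continuous function that is nonnegative on `s` with a lower semicontinuous
nonpositive function is lower semicontinuous on `s`. -/
lemma lscOn_mul {g f : X → ℝ} {s : Set X} (hg : Continuous g) (hgs : ∀ x ∈ s, 0 ≤ g x)
    (hf : LowerSemicontinuous f) (hf0 : ∀ x, f x ≤ 0) :
    LowerSemicontinuousOn (fun x => g x * f x) s := by
  intro x₀ hx₀ y hy
  replace hy : y < g x₀ * f x₀ := hy
  have hg₀ : 0 ≤ g x₀ := hgs x₀ hx₀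
  have hprod : g x₀ * f x₀ ≤ 0 := mul_nonpos_of_nonneg_of_nonpos hg₀ (hf0 x₀)
  have hypos : y < 0 := lt_of_lt_of_le hy hprod
  set δ : ℝ := min 1 ((g x₀ * f x₀ - y)/(2*(g x₀ + |f x₀| + 1))) with hδdef
  have hB : (0:ℝ) < g x₀ + |f x₀| + 1 := by positivity
  have hδpos : 0 < δ := lt_min one_pos (div_pos (by linarith) (by positivity))
  have hδ1 : δ ≤ 1 := min_le_left _ _
  have hev1 : ∀ᶠ x in nhds x₀, g x < g x₀ + δ :=
    (hg.continuousAt (x := x₀)).eventually_lt_const (by linarith)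
  have hev2 : ∀ᶠ x in nhds x₀, f x₀ - δ < f x := hf x₀ (f x₀ - δ) (by linarith)
  have hev1' : ∀ᶠ x in nhdsWithin x₀ s, g x < g x₀ + δ := nhdsWithin_le_nhds hev1
  have hev2' : ∀ᶠ x in nhdsWithin x₀ s, f x₀ - δ < f x := nhdsWithin_le_nhds hev2
  filter_upwards [hev1', hev2', eventually_mem_nhdsWithin] with x h1 h2 hxs
  have hgx : 0 ≤ g x := hgs x hxs
  have h4 : g x * f x ≥ (g x₀ + δ) * f x := by nlinarith [hf0 x]
  have h5 : (g x₀ + δ) * f x > (g x₀ + δ) * (f x₀ - δ) := by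
    have : (0:ℝ) < g x₀ + δ := by linarith
    exact (mul_lt_mul_iff_right₀ this).2 h2
  have hδd : δ * (2*(g x₀ + |f x₀| + 1)) ≤ g x₀ * f x₀ - y := by
    have h7 : δ ≤ (g x₀ * f x₀ - y)/(2*(g x₀ + |f x₀| + 1)) := min_le_right _ _
    rw [le_div_iff₀ (by positivity)] at h7
    linarith
  have h6 : (g x₀ + δ) * (f x₀ - δ) ≥ y := by
    nlinarith [abs_nonneg (f x₀), le_abs_self (f x₀), neg_abs_le (f x₀), hδpos]
  show y < g x * f x
  linarith

end lscHelpers2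
section gainLemmas

open MeasureTheory Finset

variable {A : Type*} [Fintype A] [DecidableEq A] [Nonempty A]
  {P : A → Finset A → ℝ} {μQ : Measure ℝ} [IsProbabilityMeasure μQ] {π : A → ℝ}

lemma piStar_of_nonempty {A' : Finset A} (h : A'.Nonempty) : piStar π A' = A'.sup' h π :=
  dif_pos h

lemma le_piStar {A' : Finset A} {c : A} (hc : c ∈ A') : π c ≤ piStar π A' := by
  rw [piStar_of_nonempty ⟨c, hc⟩]
  exact Finset.le_sup' π hc

lemma piStar_le_max {A' : Finset A} (h : A'.Nonempty) :
    piStar π A' ≤ Finset.univ.sup' Finset.univ_nonempty π := by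
  rw [piStar_of_nonempty h]
  exact Finset.sup'_le h π fun c _ => Finset.le_sup' π (Finset.mem_univ c)

lemma gain_eq_Fint (a : A) :
    gain P μQ π a
      = ∑ A' ∈ (Finset.univ.erase a).powerset, P a A' * Fint μQ (piStar π A' - π a) := rfl

lemma gain_nonneg (hPnn : ∀ a A', 0 ≤ P a A') (a : A) : 0 ≤ gain P μQ π a := by
  rw [gain_eq_Fint]
  exact Finset.sum_nonneg fun A' _ => mul_nonneg (hPnn a A') (Fint_nonneg μQ _)

variable (hQ0 : ∀ q : ℝ, q < 0 → Qfun μQ q = 0)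
include hQ0

lemma gain_zero_of_max (hPempty : ∀ a, P a (∅ : Finset A) = 0)
    {a : A} (ha : Finset.univ.sup' Finset.univ_nonempty π ≤ π a) : gain P μQ π a = 0 := by
  rw [gain_eq_Fint]
  refine Finset.sum_eq_zero fun A' _ => ?_
  rcases A'.eq_empty_or_nonempty with rfl | hne
  · rw [hPempty a, zero_mul]
  · rw [Fint_zero hQ0 (by linarith [piStar_le_max (π := π) hne]), mul_zero]

lemma gain_eq_sum_univ (hPsupp : ∀ a A', ¬ A' ⊆ Finset.univ.erase a → P a A' = 0) (a : A) :
    gain P μQ π a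
      = ∑ A' ∈ (Finset.univ : Finset A).powerset, P a A' * Fint μQ (piStar π A' - π a) := by
  rw [gain_eq_Fint]
  refine Finset.sum_subset (Finset.powerset_mono.2 (Finset.subset_univ _)) fun A' _ hA' => ?_
  rw [hPsupp a A' (by simpa [Finset.mem_powerset] using hA'), zero_mul]

lemma gain_anti
    (hPnn : ∀ a A', 0 ≤ P a A')
    (hPsupp : ∀ a A', ¬ A' ⊆ Finset.univ.erase a → P a A' = 0)
    (hPempty : ∀ a, P a (∅ : Finset A) = 0)
    (hA1ii : ∀ a b : A, ∀ S : Finset A, S ⊆ Finset.univ \ {a, b} →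
      ∑ A' ∈ (Finset.univ.erase a).powerset.filter (fun A' => (A' ∩ S).Nonempty), P a A'
        = ∑ A' ∈ (Finset.univ.erase b).powerset.filter (fun A' => (A' ∩ S).Nonempty), P b A')
    {a b : A} (hba : π b ≤ π a) : gain P μQ π a ≤ gain P μQ π b := by
  rw [gain_eq_sum_univ hQ0 hPsupp a, gain_eq_sum_univ hQ0 hPsupp b]
  refine layercake_le _ (P a) (P b) _ _
    (fun A' _ => hPnn a A') (fun A' _ => hPnn b A')
    (fun A' _ => Fint_nonneg μQ _) (fun A' _ => Fint_nonneg μQ _) ?_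
  intro t ht
  set S : Finset A := Finset.univ.filter (fun c => t ≤ Fint μQ (π c - π a)) with hS
  set S' : Finset A := Finset.univ.filter (fun c => t ≤ Fint μQ (π c - π b)) with hS'
  -- the key indicator identity
  have key : ∀ (e : A) (T : Finset A), (T = Finset.univ.filter fun c => t ≤ Fint μQ (π c - π e)) →
      ∑ A' ∈ (Finset.univ : Finset A).powerset,
          P e A' * (if t ≤ Fint μQ (piStar π A' - π e) then (1:ℝ) else 0)
        = ∑ A' ∈ (Finset.univ.erase e).powerset.filter (fun A' => (A' ∩ T).Nonempty), P e A' := by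
    intro e T hT
    have step1 : ∀ A' ∈ (Finset.univ : Finset A).powerset,
        P e A' * (if t ≤ Fint μQ (piStar π A' - π e) then (1:ℝ) else 0)
          = if (A' ∩ T).Nonempty then P e A' else 0 := by
      intro A' _
      by_cases hP : P e A' = 0
      · simp [hP]
      · have hne : A'.Nonempty := by
          rcases A'.eq_empty_or_nonempty with rfl | h
          · exact absurd (hPempty e) hP
          · exact h
        have hsup : Fint μQ (piStar π A' - π e)
            = A'.sup' hne (fun c => Fint μQ (π c - π e)) := by
          rw [piStar_of_nonempty hne]
          have hmono : Monotone (fun v => Fint μQ (v - π e)) :=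
            fun x y hxy => Fint_mono hQ0 (by linarith)
          have := Finset.comp_sup'_eq_sup'_comp hne (f := π)
            (fun v => Fint μQ (v - π e)) (fun x y => hmono.map_max)
          exact this
        have hiff : (t ≤ Fint μQ (piStar π A' - π e)) ↔ (A' ∩ T).Nonempty := by
          rw [hsup, Finset.le_sup'_iff]
          constructor
          · rintro ⟨c, hc, hct⟩
            exact ⟨c, Finset.mem_inter.2 ⟨hc, by rw [hT]; simp [hct]⟩⟩
          · rintro ⟨c, hc⟩
            rw [Finset.mem_inter, hT] at hc
            exact ⟨c, hc.1, by simpa using hc.2⟩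
        by_cases hcase : t ≤ Fint μQ (piStar π A' - π e)
        · rw [if_pos hcase, if_pos (hiff.1 hcase), mul_one]
        · rw [if_neg hcase, if_neg (fun hn => hcase (hiff.2 hn)), mul_zero]
    rw [Finset.sum_congr rfl step1]
    rw [Finset.sum_filter]
    symm
    refine Finset.sum_subset (Finset.powerset_mono.2 (Finset.subset_univ _)) fun A' _ hA' => ?_
    rw [hPsupp e A' (by simpa [Finset.mem_powerset] using hA')]
    simp
  rw [key a S hS, key b S' hS']
  have hSsub : S ⊆ Finset.univ \ {a, b} := by
    intro c hc
    rw [hS, Finset.mem_filter] at hc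
    have hpos : 0 < π c - π a := Fint_pos_imp hQ0 (lt_of_lt_of_le ht hc.2)
    have hca : c ≠ a := fun h => by rw [h] at hpos; linarith
    have hcb : c ≠ b := fun h => by rw [h] at hpos; linarith
    simp [Finset.mem_sdiff, hca, hcb]
  rw [hA1ii a b S hSsub]
  refine Finset.sum_le_sum_of_subset_of_nonneg ?_ fun A' _ _ => hPnn b A'
  refine Finset.monotone_filter_right _ fun A' _ hA' => ?_
  obtain ⟨c, hc⟩ := hA'
  rw [Finset.mem_inter] at hc
  refine ⟨c, Finset.mem_inter.2 ⟨hc.1, ?_⟩⟩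
  have := hc.2
  rw [hS, Finset.mem_filter] at this
  rw [hS', Finset.mem_filter]
  exact ⟨Finset.mem_univ c, le_trans this.2 (Fint_mono hQ0 (by linarith))⟩

lemma gain_pos
    (hPnn : ∀ a A', 0 ≤ P a A')
    (hQ1b : ∀ q : ℝ, 0 < q → 0 < Qfun μQ q)
    (hA1i : ∀ a b : A, b ≠ a →
      0 < ∑ A' ∈ (Finset.univ.erase a).powerset.filter (fun A' => b ∈ A'), P a A')
    {a : A} (ha : π a < Finset.univ.sup' Finset.univ_nonempty π) : 0 < gain P μQ π a := by
  obtain ⟨c, _, hc⟩ := Finset.exists_mem_eq_sup' Finset.univ_nonempty π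
  have hac : π a < π c := by rw [← hc]; exact ha
  have hca : c ≠ a := fun h => by rw [h] at hac; linarith
  have hκ : 0 < Fint μQ (π c - π a) := Fint_pos hQ0 (by linarith) hQ1b
  calc (0:ℝ) < (∑ A' ∈ (Finset.univ.erase a).powerset.filter (fun A' => c ∈ A'), P a A')
        * Fint μQ (π c - π a) := mul_pos (hA1i a c hca) hκ
    _ = ∑ A' ∈ (Finset.univ.erase a).powerset.filter (fun A' => c ∈ A'),
          P a A' * Fint μQ (π c - π a) := by rw [Finset.sum_mul]
    _ ≤ ∑ A' ∈ (Finset.univ.erase a).powerset.filter (fun A' => c ∈ A'),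
          P a A' * Fint μQ (piStar π A' - π a) := by
        refine Finset.sum_le_sum fun A' hA' => ?_
        rw [Finset.mem_filter] at hA'
        exact mul_le_mul_of_nonneg_left
          (Fint_mono hQ0 (by linarith [le_piStar (π := π) hA'.2])) (hPnn a A')
    _ ≤ gain P μQ π a := by
        rw [gain_eq_Fint]
        exact Finset.sum_le_sum_of_subset_of_nonneg (Finset.filter_subset _ _)
          fun A' _ _ => mul_nonneg (hPnn a A') (Fint_nonneg μQ _)

end gainLemmas
section gain2Lemmas

open MeasureTheory Finset

variable {A : Type*} [Fintype A] [DecidableEq A] [Nonempty A]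
  {P : A → Finset A → ℝ} {μQ : Measure ℝ} [IsProbabilityMeasure μQ] {π : A → ℝ}

lemma gainMin_nonneg (hPnn : ∀ a A', 0 ≤ P a A') (A' : Finset A) :
    0 ≤ gainMin P μQ π A' := by
  rw [gainMin]
  split
  · exact Finset.le_inf' _ _ fun b _ => gain_nonneg hPnn b
  · exact le_refl _

lemma gainMin_le {A' : Finset A} {b : A} (hb : b ∈ A') :
    gainMin P μQ π A' ≤ gain P μQ π b := by
  rw [gainMin, dif_pos ⟨b, hb⟩]
  exact Finset.inf'_le _ hb

variable
  (hQ0 : ∀ q : ℝ, q < 0 → Qfun μQ q = 0)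
  (hPnn : ∀ a A', 0 ≤ P a A')
  (hPsupp : ∀ a A', ¬ A' ⊆ Finset.univ.erase a → P a A' = 0)
  (hPempty : ∀ a, P a (∅ : Finset A) = 0)
  (hA1ii : ∀ a b : A, ∀ S : Finset A, S ⊆ Finset.univ \ {a, b} →
      ∑ A' ∈ (Finset.univ.erase a).powerset.filter (fun A' => (A' ∩ S).Nonempty), P a A'
        = ∑ A' ∈ (Finset.univ.erase b).powerset.filter (fun A' => (A' ∩ S).Nonempty), P b A')
include hQ0 hPnn hPsupp hPempty hA1ii

lemma term_nonpos (a : A) (A' : Finset A) :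
    P a A' * Qfun μQ (piStar π A' - π a) * (gainMin P μQ π A' - gain P μQ π a) ≤ 0 := by
  rcases A'.eq_empty_or_nonempty with rfl | hne
  · rw [hPempty a, zero_mul, zero_mul]
  · by_cases hd : piStar π A' - π a < 0
    · rw [hQ0 _ hd, mul_zero, zero_mul]
    · push_neg at hd
      obtain ⟨b, hbA, hb⟩ := Finset.exists_mem_eq_sup' hne π
      have hab : π a ≤ π b := by rw [← hb, ← piStar_of_nonempty hne]; linarith
      have h1 : gain P μQ π b ≤ gain P μQ π a := gain_anti hQ0 hPnn hPsupp hPempty hA1ii hab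
      have h2 : gainMin P μQ π A' ≤ gain P μQ π b := gainMin_le hbA
      exact mul_nonpos_of_nonneg_of_nonpos
        (mul_nonneg (hPnn a A') (Qfun_nonneg μQ _)) (by linarith)

lemma gain2_nonpos (a : A) : gain2 P μQ π a ≤ 0 :=
  Finset.sum_nonpos fun A' _ => term_nonpos hQ0 hPnn hPsupp hPempty hA1ii a A'

lemma gain2_zero_of_max {a : A}
    (ha : Finset.univ.sup' Finset.univ_nonempty π ≤ π a) : gain2 P μQ π a = 0 := by
  refine Finset.sum_eq_zero fun A' _ => ?_
  rcases A'.eq_empty_or_nonempty with rfl | hne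
  · rw [hPempty a, zero_mul, zero_mul]
  · by_cases hd : piStar π A' - π a < 0
    · rw [hQ0 _ hd, mul_zero, zero_mul]
    · push_neg at hd
      obtain ⟨b, hbA, hb⟩ := Finset.exists_mem_eq_sup' hne π
      have hbmax : Finset.univ.sup' Finset.univ_nonempty π ≤ π b := by
        rw [← hb, ← piStar_of_nonempty hne]
        linarith
      have hgb : gain P μQ π b = 0 := gain_zero_of_max hQ0 hPempty hbmax
      have hga : gain P μQ π a = 0 := gain_zero_of_max hQ0 hPempty ha
      have h2 : gainMin P μQ π A' ≤ gain P μQ π b := gainMin_le hbA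
      have h3 : 0 ≤ gainMin P μQ π A' := gainMin_nonneg hPnn A'
      have : gainMin P μQ π A' = 0 := le_antisymm (by rw [← hgb]; exact h2) h3
      rw [this, hga, sub_zero, mul_zero]

lemma gain2_neg
    (hQ1b : ∀ q : ℝ, 0 < q → 0 < Qfun μQ q)
    (hA1i : ∀ a b : A, b ≠ a →
      0 < ∑ A' ∈ (Finset.univ.erase a).powerset.filter (fun A' => b ∈ A'), P a A')
    {a : A} (ha : π a < Finset.univ.sup' Finset.univ_nonempty π) : gain2 P μQ π a < 0 := by
  obtain ⟨c, _, hc⟩ := Finset.exists_mem_eq_sup' Finset.univ_nonempty π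
  have hac : π a < π c := by rw [← hc]; exact ha
  have hca : c ≠ a := fun h => by rw [h] at hac; linarith
  have hsum := hA1i a c hca
  have hex : ∃ A'₀ ∈ (Finset.univ.erase a).powerset.filter (fun A' => c ∈ A'),
      P a A'₀ ≠ 0 := by
    by_contra hcon
    push_neg at hcon
    rw [Finset.sum_eq_zero hcon] at hsum
    exact lt_irrefl _ hsum
  obtain ⟨A'₀, hA'₀mem, hP₀⟩ := hex
  rw [Finset.mem_filter] at hA'₀mem
  have hP₀pos : 0 < P a A'₀ := lt_of_le_of_ne (hPnn a A'₀) (Ne.symm hP₀)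
  have hcA : c ∈ A'₀ := hA'₀mem.2
  have hd : 0 < piStar π A'₀ - π a := by
    have := le_piStar (π := π) hcA
    linarith
  have hQpos : 0 < Qfun μQ (piStar π A'₀ - π a) := hQ1b _ hd
  have hgc : gain P μQ π c = 0 := gain_zero_of_max hQ0 hPempty (le_of_eq hc)
  have hga : 0 < gain P μQ π a :=
    gain_pos hQ0 hPnn hQ1b hA1i ha
  have hterm : P a A'₀ * Qfun μQ (piStar π A'₀ - π a)
      * (gainMin P μQ π A'₀ - gain P μQ π a) < 0 := by
    have hm : gainMin P μQ π A'₀ ≤ 0 := by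
      have := gainMin_le (π := π) (P := P) (μQ := μQ) hcA
      rw [hgc] at this
      exact this
    have : gainMin P μQ π A'₀ - gain P μQ π a < 0 := by linarith
    exact mul_neg_of_pos_of_neg (mul_pos hP₀pos hQpos) this
  rw [gain2]
  calc ∑ A' ∈ (Finset.univ.erase a).powerset,
        P a A' * Qfun μQ (piStar π A' - π a) * (gainMin P μQ π A' - gain P μQ π a)
      < ∑ _A' ∈ (Finset.univ.erase a).powerset, (0:ℝ) := by
        refine Finset.sum_lt_sum (fun A' _ => term_nonpos hQ0 hPnn hPsupp hPempty hA1ii a A')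
          ⟨A'₀, hA'₀mem.1, hterm⟩
    _ = 0 := by simp

end gain2Lemmas
section contLemmas

open MeasureTheory Finset

variable {A : Type*} [Fintype A] [DecidableEq A] [Nonempty A]
  {P : A → Finset A → ℝ} {μQ : Measure ℝ} [IsProbabilityMeasure μQ]

lemma cont_piStar (A' : Finset A) : Continuous fun π : A → ℝ => piStar π A' := by
  rcases A'.eq_empty_or_nonempty with rfl | hne
  · simp only [piStar, Finset.not_nonempty_empty, dif_neg, not_false_iff]
    exact continuous_const
  · have : (fun π : A → ℝ => piStar π A') = fun π : A → ℝ => A'.sup' hne π := by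
      funext π
      exact piStar_of_nonempty hne
    rw [this]
    exact Continuous.finset_sup'_apply hne fun i _ => continuous_apply i

variable (hQ0 : ∀ q : ℝ, q < 0 → Qfun μQ q = 0)
include hQ0

lemma cont_gain (a : A) : Continuous fun π : A → ℝ => gain P μQ π a := by
  have : (fun π : A → ℝ => gain P μQ π a)
      = fun π : A → ℝ => ∑ A' ∈ (Finset.univ.erase a).powerset,
          P a A' * Fint μQ (piStar π A' - π a) := by
    funext π
    exact gain_eq_Fint a
  rw [this]
  refine continuous_finset_sum _ fun A' _ => ?_
  exact continuous_const.mul ((Fint_lipschitz hQ0).continuous.comp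
    ((cont_piStar A').sub (continuous_apply a)))

lemma cont_gainMin (A' : Finset A) : Continuous fun π : A → ℝ => gainMin P μQ π A' := by
  rcases A'.eq_empty_or_nonempty with rfl | hne
  · simp only [gainMin, Finset.not_nonempty_empty, dif_neg, not_false_iff]
    exact continuous_const
  · have : (fun π : A → ℝ => gainMin P μQ π A')
        = fun π : A → ℝ => A'.inf' hne (fun b => gain P μQ π b) := by
      funext π
      rw [gainMin, dif_pos hne]
    rw [this]
    exact Continuous.finset_inf'_apply hne fun i _ => cont_gain hQ0 i

lemma usc_Qterm (a : A) (A' : Finset A) :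
    UpperSemicontinuous (fun π : A → ℝ => Qfun μQ (piStar π A' - π a)) := by
  intro x₀ y hy
  have hcont : Continuous fun π : A → ℝ => piStar π A' - π a :=
    (cont_piStar A').sub (continuous_apply a)
  exact (hcont.tendsto x₀).eventually (Qfun_usc (μQ := μQ) _ y hy)

variable
  (hPnn : ∀ a A', 0 ≤ P a A')
  (hPsupp : ∀ a A', ¬ A' ⊆ Finset.univ.erase a → P a A' = 0)
  (hPempty : ∀ a, P a (∅ : Finset A) = 0)
  (hA1ii : ∀ a b : A, ∀ S : Finset A, S ⊆ Finset.univ \ {a, b} →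
      ∑ A' ∈ (Finset.univ.erase a).powerset.filter (fun A' => (A' ∩ S).Nonempty), P a A'
        = ∑ A' ∈ (Finset.univ.erase b).powerset.filter (fun A' => (A' ∩ S).Nonempty), P b A')
include hPnn hPsupp hPempty hA1ii

lemma lsc_gain2term (a : A) (A' : Finset A) :
    LowerSemicontinuous (fun π : A → ℝ =>
      Qfun μQ (piStar π A' - π a) * (gainMin P μQ π A' - gain P μQ π a)) := by
  refine lsc_usc_mul_nonpos (usc_Qterm hQ0 a A') (fun π => Qfun_nonneg μQ _)
    (fun π => Qfun_le_one μQ _) ((cont_gainMin hQ0 A').sub (cont_gain hQ0 a)) ?_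
  intro π hQpos
  rcases A'.eq_empty_or_nonempty with rfl | hne
  · have : gainMin P μQ π (∅ : Finset A) = 0 := by rw [gainMin, dif_neg]; simp
    rw [this]
    simp only [zero_sub, neg_nonpos]
    exact gain_nonneg hPnn a
  · have hd : ¬ (piStar π A' - π a < 0) := by
      intro hlt
      rw [hQ0 _ hlt] at hQpos
      exact lt_irrefl _ hQpos
    push_neg at hd
    obtain ⟨b, hbA, hb⟩ := Finset.exists_mem_eq_sup' hne π
    have hab : π a ≤ π b := by rw [← hb, ← piStar_of_nonempty hne]; linarith
    have h1 : gain P μQ π b ≤ gain P μQ π a := gain_anti hQ0 hPnn hPsupp hPempty hA1ii hab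
    have h2 : gainMin P μQ π A' ≤ gain P μQ π b := gainMin_le hbA
    linarith

lemma Qterm_mul_nonpos (a : A) (A' : Finset A) (π : A → ℝ) :
    Qfun μQ (piStar π A' - π a) * (gainMin P μQ π A' - gain P μQ π a) ≤ 0 := by
  by_cases hQpos : 0 < Qfun μQ (piStar π A' - π a)
  · rcases A'.eq_empty_or_nonempty with rfl | hne
    · have : gainMin P μQ π (∅ : Finset A) = 0 := by rw [gainMin, dif_neg]; simp
      refine mul_nonpos_of_nonneg_of_nonpos (Qfun_nonneg μQ _) ?_
      rw [this]
      simp only [zero_sub, neg_nonpos]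
      exact gain_nonneg hPnn a
    · have hd : ¬ (piStar π A' - π a < 0) := by
        intro hlt
        rw [hQ0 _ hlt] at hQpos
        exact lt_irrefl _ hQpos
      push_neg at hd
      obtain ⟨b, hbA, hb⟩ := Finset.exists_mem_eq_sup' hne π
      have hab : π a ≤ π b := by rw [← hb, ← piStar_of_nonempty hne]; linarith
      have h1 : gain P μQ π b ≤ gain P μQ π a := gain_anti hQ0 hPnn hPsupp hPempty hA1ii hab
      have h2 : gainMin P μQ π A' ≤ gain P μQ π b := gainMin_le hbA
      refine mul_nonpos_of_nonneg_of_nonpos (Qfun_nonneg μQ _) (by linarith)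
  · push_neg at hQpos
    have : Qfun μQ (piStar π A' - π a) = 0 := le_antisymm hQpos (Qfun_nonneg μQ _)
    rw [this, zero_mul]

lemma lsc_gain2 (a : A) : LowerSemicontinuous (fun π : A → ℝ => gain2 P μQ π a) := by
  have heq : (fun π : A → ℝ => gain2 P μQ π a)
      = fun π : A → ℝ => ∑ A' ∈ (Finset.univ.erase a).powerset,
          P a A' * (Qfun μQ (piStar π A' - π a) * (gainMin P μQ π A' - gain P μQ π a)) := by
    funext π
    rw [gain2]
    exact Finset.sum_congr rfl fun A' _ => mul_assoc _ _ _
  rw [heq]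
  refine lowerSemicontinuous_sum fun A' _ => ?_
  exact lsc_const_mul (lsc_gain2term hQ0 hPnn hPsupp hPempty hA1ii a A') (hPnn a A')

end contLemmas
theorem stmt7 {A : Type*} [Fintype A] [DecidableEq A] [Nonempty A]
    (P : A → Finset A → ℝ) (μQ : Measure ℝ) [IsProbabilityMeasure μQ]
    (hPnn : ∀ a A', 0 ≤ P a A')
    (hPsupp : ∀ a A', ¬ A' ⊆ Finset.univ.erase a → P a A' = 0)
    (hPempty : ∀ a, P a (∅ : Finset A) = 0)
    (hPsum : ∀ a, ∑ A' ∈ (Finset.univ.erase a).powerset, P a A' = 1)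
    -- Assumption Q1
    (hQ1a : ∀ q : ℝ, q < 0 → Qfun μQ q = 0)
    (hQ1b : ∀ q : ℝ, 0 < q → 0 < Qfun μQ q)
    -- Assumption A1-i
    (hA1i : ∀ a b : A, b ≠ a →
      0 < ∑ A' ∈ (Finset.univ.erase a).powerset.filter (fun A' => b ∈ A'), P a A')
    -- Assumption A1-ii
    (hA1ii : ∀ a b : A, ∀ S : Finset A, S ⊆ Finset.univ \ {a, b} →
      ∑ A' ∈ (Finset.univ.erase a).powerset.filter (fun A' => (A' ∩ S).Nonempty), P a A'
        = ∑ A' ∈ (Finset.univ.erase b).powerset.filter (fun A' => (A' ∩ S).Nonempty), P b A') :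
    -- (a) `H` is lower semicontinuous on `Δ^𝒜 × ℝ^𝒜`
    LowerSemicontinuousOn
        (fun p : (A → ℝ) × (A → ℝ) => Hagg P μQ p.1 p.2)
        ((stdSimplex ℝ A) ×ˢ (Set.univ : Set (A → ℝ))) ∧
    -- (b) `H(x)[π] ≤ 0`
    (∀ x ∈ stdSimplex ℝ A, ∀ π : A → ℝ, Hagg P μQ x π ≤ 0) ∧
    -- (c) `H(x)[π] = 0` iff every used action is optimal
    (∀ x ∈ stdSimplex ℝ A, ∀ π : A → ℝ,
      (Hagg P μQ x π = 0 ↔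
        ∀ a : A, 0 < x a → π a = Finset.univ.sup' Finset.univ_nonempty π)) := by
  have hQ0 := hQ1a
  refine ⟨?_, ?_, ?_⟩
  · -- (a)
    intro p hp
    have : LowerSemicontinuousWithinAt
        (fun p : (A → ℝ) × (A → ℝ) => ∑ a : A, p.1 a * gain2 P μQ p.2 a)
        ((stdSimplex ℝ A) ×ˢ (Set.univ : Set (A → ℝ))) p := by
      refine lowerSemicontinuousWithinAt_sum fun a _ => ?_
      refine lscOn_mul ((continuous_apply a).comp continuous_fst)
        (fun q hq => hq.1.1 a)
        (lsc_comp_continuous (lsc_gain2 hQ0 hPnn hPsupp hPempty hA1ii a) continuous_snd)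
        (fun q => gain2_nonpos hQ0 hPnn hPsupp hPempty hA1ii a) p hp
    exact this
  · -- (b)
    intro x hx π
    refine Finset.sum_nonpos fun a _ => ?_
    exact mul_nonpos_of_nonneg_of_nonpos (hx.1 a)
      (gain2_nonpos hQ0 hPnn hPsupp hPempty hA1ii a)
  · -- (c)
    intro x hx π
    have hterm : ∀ a ∈ (Finset.univ : Finset A), x a * gain2 P μQ π a ≤ 0 := fun a _ =>
      mul_nonpos_of_nonneg_of_nonpos (hx.1 a)
        (gain2_nonpos hQ0 hPnn hPsupp hPempty hA1ii a)
    rw [Hagg, Finset.sum_eq_zero_iff_of_nonpos hterm]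
    constructor
    · intro h a hxa
      have hz := h a (Finset.mem_univ a)
      have hg : gain2 P μQ π a = 0 := by
        rcases mul_eq_zero.1 hz with h1 | h1
        · exact absurd h1 (ne_of_gt hxa)
        · exact h1
      have hle : π a ≤ Finset.univ.sup' Finset.univ_nonempty π :=
        Finset.le_sup' π (Finset.mem_univ a)
      rcases eq_or_lt_of_le hle with he | hlt
      · exact he
      · exact absurd hg (ne_of_lt (gain2_neg hQ0 hPnn hPsupp hPempty hA1ii hQ1b hA1i hlt))
    · intro h a _
      rcases eq_or_lt_of_le (hx.1 a) with hxa | hxa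
      · rw [← hxa, zero_mul]
      · rw [gain2_zero_of_max hQ0 hPnn hPsupp hPempty hA1ii (le_of_eq (h a hxa).symm), mul_zero]
end

section
/- Under Assumptions Q1, A1-i and A1-ii, for every x ∈ Δ^𝒜, every π ∈ ℝ^𝒜, and every family (z_a)_{a∈𝒜} in which each z_a is an exact-rate transition vector for a at π, the vector Δx := Σ_{a∈𝒜} x_a z_a satisfies Δx · g_*[π] = H(x)[π]. -/
open MeasureTheory Finset
open scoped Classical

/-- The set of optimal actions in `S`: `b_*[π](S)`. -/
noncomputable def bStar {A : Type*} (π : A → ℝ) (S : Finset A) : Finset A :=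
  S.filter (fun b => π b = piStar π S)

section Aux

lemma aux_ae_nonneg (μQ : Measure ℝ) [IsProbabilityMeasure μQ]
    (hQ1a : ∀ q : ℝ, q < 0 → Qfun μQ q = 0) : ∀ᵐ q ∂μQ, 0 ≤ q := by
  have h0 : ∀ q : ℝ, q < 0 → μQ (Set.Iic q) = 0 := by
    intro q hq
    have := hQ1a q hq
    rw [Qfun, ENNReal.toReal_eq_zero_iff] at this
    rcases this with h | h
    · exact h
    · exact absurd h (measure_ne_top _ _)
  have hsub : Set.Iio (0:ℝ) ⊆ ⋃ n : ℕ, Set.Iic (-(1:ℝ)/(n+1)) := by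
    intro q hq
    simp only [Set.mem_Iio] at hq
    obtain ⟨n, hn⟩ := exists_nat_gt (1 / (-q))
    refine Set.mem_iUnion.2 ⟨n, ?_⟩
    simp only [Set.mem_Iic]
    have hq' : 0 < -q := by linarith
    have hpos : (0:ℝ) < (n:ℝ) + 1 := by positivity
    have hn1 : 1 / (-q) < (n:ℝ) + 1 := by linarith
    rw [div_lt_iff₀ hq'] at hn1
    have h2 : (1:ℝ)/((n:ℝ)+1) < -q := by rw [div_lt_iff₀ hpos]; linarith
    have h3 : -(1:ℝ)/((n:ℝ)+1) = -((1:ℝ)/((n:ℝ)+1)) := by ring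
    rw [h3]; linarith
  have hIio : μQ (Set.Iio (0:ℝ)) = 0 := by
    refine le_antisymm ?_ zero_le
    calc μQ (Set.Iio 0) ≤ μQ (⋃ n : ℕ, Set.Iic (-(1:ℝ)/(n+1))) := measure_mono hsub
    _ ≤ ∑' n : ℕ, μQ (Set.Iic (-(1:ℝ)/(n+1))) := measure_iUnion_le _
    _ = 0 := by
        rw [ENNReal.tsum_eq_zero]
        intro n
        exact h0 _ (div_neg_of_neg_of_pos (by norm_num) (by positivity))
  rw [ae_iff]
  convert hIio using 2
  ext q
  simp

lemma aux_integrable (μQ : Measure ℝ) [IsProbabilityMeasure μQ]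
    (hae : ∀ᵐ q ∂μQ, 0 ≤ q) (t : ℝ) :
    Integrable (fun q => max (t - q) 0) μQ := by
  refine Integrable.mono' (integrable_const (max t 0)) ?_ ?_
  · exact (Continuous.max (by continuity) continuous_const).aestronglyMeasurable
  · filter_upwards [hae] with q hq
    rw [Real.norm_eq_abs, abs_of_nonneg (le_max_right _ _)]
    exact max_le_max (by linarith) le_rfl

lemma aux_F_nonneg (μQ : Measure ℝ) (t : ℝ) : 0 ≤ ∫ q, max (t - q) 0 ∂μQ :=
  integral_nonneg fun q => le_max_right _ _

lemma aux_F_mono (μQ : Measure ℝ) [IsProbabilityMeasure μQ]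
    (hae : ∀ᵐ q ∂μQ, 0 ≤ q) {t t' : ℝ} (h : t ≤ t') :
    ∫ q, max (t - q) 0 ∂μQ ≤ ∫ q, max (t' - q) 0 ∂μQ :=
  integral_mono (aux_integrable μQ hae t) (aux_integrable μQ hae t')
    (fun q => max_le_max (by linarith) le_rfl)

lemma aux_F_zero (μQ : Measure ℝ) [IsProbabilityMeasure μQ]
    (hae : ∀ᵐ q ∂μQ, 0 ≤ q) {t : ℝ} (h : t ≤ 0) :
    ∫ q, max (t - q) 0 ∂μQ = 0 := by
  have hc : (fun q => max (t - q) 0) =ᵐ[μQ] (fun _ => (0:ℝ)) := by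
    filter_upwards [hae] with q hq
    exact max_eq_right (by linarith : t - q ≤ 0)
  rw [integral_congr_ae hc, integral_zero]

variable {A : Type*} [Fintype A] [DecidableEq A]

lemma aux_trace_cum (P : A → Finset A → ℝ)
    (hPsum : ∀ a, ∑ A' ∈ (Finset.univ.erase a).powerset, P a A' = 1)
    (hA1ii : ∀ a b : A, ∀ S : Finset A, S ⊆ Finset.univ \ {a, b} →
      ∑ A' ∈ (Finset.univ.erase a).powerset.filter (fun A' => (A' ∩ S).Nonempty), P a A'
        = ∑ A' ∈ (Finset.univ.erase b).powerset.filter (fun A' => (A' ∩ S).Nonempty), P b A')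
    (a b : A) (T : Finset A) :
    ∑ A' ∈ (Finset.univ.erase a).powerset.filter
        (fun A' => A' ∩ (Finset.univ \ {a, b}) ⊆ T), P a A'
      = ∑ A' ∈ (Finset.univ.erase b).powerset.filter
        (fun A' => A' ∩ (Finset.univ \ {a, b}) ⊆ T), P b A' := by
  set C : Finset A := Finset.univ \ {a, b} with hC
  have key : ∀ c : A,
      ∑ A' ∈ (Finset.univ.erase c).powerset.filter (fun A' => A' ∩ C ⊆ T), P c A'
        = 1 - ∑ A' ∈ (Finset.univ.erase c).powerset.filter
            (fun A' => (A' ∩ (C \ T)).Nonempty), P c A' := by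
    intro c
    have hiff : ∀ A' : Finset A, (A' ∩ C ⊆ T) ↔ ¬ (A' ∩ (C \ T)).Nonempty := by
      intro A'
      constructor
      · rintro h ⟨x, hx⟩
        simp only [Finset.mem_inter, Finset.mem_sdiff] at hx
        exact hx.2.2 (h (Finset.mem_inter.2 ⟨hx.1, hx.2.1⟩))
      · intro h x hx
        rw [Finset.mem_inter] at hx
        by_contra hxT
        exact h ⟨x, by simp only [Finset.mem_inter, Finset.mem_sdiff]; exact ⟨hx.1, hx.2, hxT⟩⟩
    have heq : (Finset.univ.erase c).powerset.filter (fun A' => A' ∩ C ⊆ T)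
        = (Finset.univ.erase c).powerset.filter (fun A' => ¬ (A' ∩ (C \ T)).Nonempty) :=
      Finset.filter_congr (fun A' _ => hiff A')
    rw [heq, eq_sub_iff_add_eq, add_comm,
      Finset.sum_filter_add_sum_filter_not _ (fun A' => (A' ∩ (C \ T)).Nonempty) (P c),
      hPsum c]
  rw [key a, key b, hA1ii a b (C \ T) (Finset.sdiff_subset.trans (by rw [hC]))]

lemma aux_trace_pt (P : A → Finset A → ℝ)
    (hPsum : ∀ a, ∑ A' ∈ (Finset.univ.erase a).powerset, P a A' = 1)
    (hA1ii : ∀ a b : A, ∀ S : Finset A, S ⊆ Finset.univ \ {a, b} →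
      ∑ A' ∈ (Finset.univ.erase a).powerset.filter (fun A' => (A' ∩ S).Nonempty), P a A'
        = ∑ A' ∈ (Finset.univ.erase b).powerset.filter (fun A' => (A' ∩ S).Nonempty), P b A')
    (a b : A) :
    ∀ T : Finset A, T ⊆ Finset.univ \ {a, b} →
    ∑ A' ∈ (Finset.univ.erase a).powerset.filter
        (fun A' => A' ∩ (Finset.univ \ {a, b}) = T), P a A'
      = ∑ A' ∈ (Finset.univ.erase b).powerset.filter
        (fun A' => A' ∩ (Finset.univ \ {a, b}) = T), P b A' := by
  intro T
  induction T using Finset.strongInduction with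
  | _ T ih =>
    intro hT
    set C : Finset A := Finset.univ \ {a, b} with hC
    have decomp : ∀ c : A,
        ∑ T' ∈ T.powerset,
          ∑ A' ∈ (Finset.univ.erase c).powerset.filter (fun A' => A' ∩ C = T'), P c A'
          = ∑ A' ∈ (Finset.univ.erase c).powerset.filter (fun A' => A' ∩ C ⊆ T), P c A' := by
      intro c
      rw [← Finset.sum_fiberwise_of_maps_to (g := fun A' => A' ∩ C) (t := T.powerset)
        (fun A' hA' => Finset.mem_powerset.2 (Finset.mem_filter.1 hA').2) (P c)]
      refine Finset.sum_congr rfl fun T' hT' => ?_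
      rw [Finset.filter_filter]
      refine Finset.sum_congr (Finset.filter_congr fun A' _ => ?_) fun _ _ => rfl
      have hT'T : T' ⊆ T := Finset.mem_powerset.1 hT'
      constructor
      · intro h; exact ⟨by show A' ∩ C ⊆ T; rw [h]; exact hT'T, h⟩
      · rintro ⟨_, h⟩; exact h
    have hsplit : ∀ c : A,
        (∑ A' ∈ (Finset.univ.erase c).powerset.filter (fun A' => A' ∩ C = T), P c A')
          = (∑ A' ∈ (Finset.univ.erase c).powerset.filter (fun A' => A' ∩ C ⊆ T), P c A')
            - ∑ T' ∈ T.powerset.erase T,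
                ∑ A' ∈ (Finset.univ.erase c).powerset.filter (fun A' => A' ∩ C = T'), P c A' := by
      intro c
      rw [← decomp c, eq_sub_iff_add_eq]
      exact Finset.add_sum_erase _
        (fun T' => ∑ A' ∈ (Finset.univ.erase c).powerset.filter (fun A' => A' ∩ C = T'), P c A')
        (Finset.mem_powerset_self T)
    rw [hsplit a, hsplit b, aux_trace_cum P hPsum hA1ii a b T]
    congr 1
    refine Finset.sum_congr rfl fun T' hT' => ?_
    have h1 := Finset.mem_erase.1 hT'
    have h2 : T' ⊂ T := Finset.ssubset_iff_subset_ne.2 ⟨Finset.mem_powerset.1 h1.2, h1.1⟩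
    exact ih T' h2 (h2.1.trans hT)

lemma aux_inter_eq (a d : A) (A' : Finset A) (hA' : A' ⊆ Finset.univ.erase a) :
    A' ∩ (Finset.univ \ {a, d}) = A'.erase d := by
  ext x
  simp only [Finset.mem_inter, Finset.mem_sdiff, Finset.mem_univ, true_and,
    Finset.mem_insert, Finset.mem_singleton, Finset.mem_erase, not_or]
  constructor
  · rintro ⟨hx, _, hxd⟩; exact ⟨hxd, hx⟩
  · rintro ⟨hxd, hx⟩; exact ⟨hx, Finset.ne_of_mem_erase (hA' hx), hxd⟩

lemma aux_gain_mono (P : A → Finset A → ℝ) (μQ : Measure ℝ) [IsProbabilityMeasure μQ]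
    (hPnn : ∀ a A', 0 ≤ P a A')
    (hPempty : ∀ a, P a (∅ : Finset A) = 0)
    (hPsum : ∀ a, ∑ A' ∈ (Finset.univ.erase a).powerset, P a A' = 1)
    (hQ1a : ∀ q : ℝ, q < 0 → Qfun μQ q = 0)
    (hA1ii : ∀ a b : A, ∀ S : Finset A, S ⊆ Finset.univ \ {a, b} →
      ∑ A' ∈ (Finset.univ.erase a).powerset.filter (fun A' => (A' ∩ S).Nonempty), P a A'
        = ∑ A' ∈ (Finset.univ.erase b).powerset.filter (fun A' => (A' ∩ S).Nonempty), P b A')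
    (π : A → ℝ) {a b : A} (hab : a ≠ b) (hπ : π b ≤ π a) :
    gain P μQ π a ≤ gain P μQ π b := by
  have hae := aux_ae_nonneg μQ hQ1a
  set C : Finset A := Finset.univ \ {a, b} with hC
  set F : ℝ → ℝ := fun t => ∫ q, max (t - q) 0 ∂μQ with hF
  set G : Finset A → ℝ := fun T => if h : T.Nonempty then F (piStar π T - π a) else 0 with hG
  have hGF : ∀ A' : Finset A, A'.Nonempty → A' ⊆ Finset.univ.erase a →
      F (piStar π A' - π a) = G (A' ∩ C) := by
    intro A' hne hsub
    rw [hC, aux_inter_eq a b A' hsub]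
    by_cases hb : b ∈ A'
    · by_cases he : (A'.erase b).Nonempty
      · have hsup : piStar π A' = max (π b) (piStar π (A'.erase b)) := by
          rw [piStar, piStar, dif_pos hne, dif_pos he]
          apply le_antisymm
          · refine Finset.sup'_le hne π fun x hx => ?_
            by_cases hxb : x = b
            · subst hxb; exact le_max_left _ _
            · exact le_trans (Finset.le_sup' π (Finset.mem_erase.2 ⟨hxb, hx⟩)) (le_max_right _ _)
          · exact max_le (Finset.le_sup' π hb) (Finset.sup'_mono π (Finset.erase_subset b A') he)
        rw [hG]
        simp only [dif_pos he]
        rcases le_total (π b) (piStar π (A'.erase b)) with h | h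
        · rw [hsup, max_eq_right h]
        · rw [hsup, max_eq_left h, hF]
          simp only []
          rw [aux_F_zero μQ hae (by linarith : π b - π a ≤ 0),
            aux_F_zero μQ hae (by linarith : piStar π (A'.erase b) - π a ≤ 0)]
      · have hA'b : A' = {b} := by
          apply Finset.eq_singleton_iff_unique_mem.2
          refine ⟨hb, fun x hx => ?_⟩
          by_contra hxb
          exact he ⟨x, Finset.mem_erase.2 ⟨hxb, hx⟩⟩
        rw [hA'b]
        have : ({b} : Finset A).erase b = ∅ := by simp
        rw [this, hG]
        simp only [dif_neg (Finset.not_nonempty_empty)]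
        rw [piStar, dif_pos (Finset.singleton_nonempty b), Finset.sup'_singleton, hF]
        exact aux_F_zero μQ hae (by linarith : π b - π a ≤ 0)
    · rw [Finset.erase_eq_of_notMem hb, hG]
      simp only [dif_pos hne]
  have hfib : ∀ c : A, ∑ A' ∈ (Finset.univ.erase c).powerset, P c A' * G (A' ∩ C)
      = ∑ T ∈ C.powerset, G T *
          (∑ A' ∈ (Finset.univ.erase c).powerset.filter (fun A' => A' ∩ C = T), P c A') := by
    intro c
    rw [← Finset.sum_fiberwise_of_maps_to (g := fun A' => A' ∩ C) (t := C.powerset)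
      (fun A' _ => Finset.mem_powerset.2 Finset.inter_subset_right)
      (fun A' => P c A' * G (A' ∩ C))]
    refine Finset.sum_congr rfl fun T hT => ?_
    rw [Finset.mul_sum]
    refine Finset.sum_congr rfl fun A' hA' => ?_
    have h2 : A' ∩ C = T := by
      have := (Finset.mem_filter.1 hA').2
      simpa using this
    rw [h2, mul_comm]
  have ha1 : gain P μQ π a = ∑ A' ∈ (Finset.univ.erase a).powerset, P a A' * G (A' ∩ C) := by
    refine Finset.sum_congr rfl fun A' hA' => ?_
    by_cases hne : A'.Nonempty
    · rw [← hGF A' hne (Finset.mem_powerset.1 hA')]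
    · rw [Finset.not_nonempty_iff_eq_empty.1 hne, hPempty a, zero_mul, zero_mul]
  have hb1 : ∑ A' ∈ (Finset.univ.erase b).powerset, P b A' * G (A' ∩ C) ≤ gain P μQ π b := by
    refine Finset.sum_le_sum fun A' hA' => ?_
    by_cases hne : A'.Nonempty
    · refine mul_le_mul_of_nonneg_left ?_ (hPnn b A')
      have hsub : A' ⊆ Finset.univ.erase b := Finset.mem_powerset.1 hA'
      have hACb : A' ∩ C = A'.erase a := by
        rw [hC, Finset.pair_comm a b]
        exact aux_inter_eq b a A' hsub
      rw [hACb, hG]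
      by_cases he : (A'.erase a).Nonempty
      · simp only [dif_pos he]
        have h1 : piStar π (A'.erase a) ≤ piStar π A' := by
          rw [piStar, piStar, dif_pos he, dif_pos hne]
          exact Finset.sup'_mono π (Finset.erase_subset a A') he
        exact aux_F_mono μQ hae (by linarith)
      · simp only [dif_neg he]
        exact aux_F_nonneg μQ _
    · rw [Finset.not_nonempty_iff_eq_empty.1 hne, hPempty b, zero_mul, zero_mul]
  calc gain P μQ π a
      = ∑ A' ∈ (Finset.univ.erase a).powerset, P a A' * G (A' ∩ C) := ha1
    _ = ∑ T ∈ C.powerset, G T *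
          (∑ A' ∈ (Finset.univ.erase a).powerset.filter (fun A' => A' ∩ C = T), P a A') :=
        hfib a
    _ = ∑ T ∈ C.powerset, G T *
          (∑ A' ∈ (Finset.univ.erase b).powerset.filter (fun A' => A' ∩ C = T), P b A') := by
        refine Finset.sum_congr rfl fun T hT => ?_
        rw [aux_trace_pt P hPsum hA1ii a b T (Finset.mem_powerset.1 hT)]
    _ = ∑ A' ∈ (Finset.univ.erase b).powerset, P b A' * G (A' ∩ C) := (hfib b).symm
    _ ≤ gain P μQ π b := hb1

lemma aux_gain_min (P : A → Finset A → ℝ) (μQ : Measure ℝ) [IsProbabilityMeasure μQ]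
    (hPnn : ∀ a A', 0 ≤ P a A')
    (hPempty : ∀ a, P a (∅ : Finset A) = 0)
    (hPsum : ∀ a, ∑ A' ∈ (Finset.univ.erase a).powerset, P a A' = 1)
    (hQ1a : ∀ q : ℝ, q < 0 → Qfun μQ q = 0)
    (hA1ii : ∀ a b : A, ∀ S : Finset A, S ⊆ Finset.univ \ {a, b} →
      ∑ A' ∈ (Finset.univ.erase a).powerset.filter (fun A' => (A' ∩ S).Nonempty), P a A'
        = ∑ A' ∈ (Finset.univ.erase b).powerset.filter (fun A' => (A' ∩ S).Nonempty), P b A')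
    (π : A → ℝ) {S : Finset A} (hS : S.Nonempty) {b : A} (hb : b ∈ bStar π S) :
    gain P μQ π b = gainMin P μQ π S := by
  rw [gainMin, dif_pos hS]
  have hb' := Finset.mem_filter.1 hb
  obtain ⟨hbS, hbval⟩ := hb'
  apply le_antisymm
  · refine Finset.le_inf' hS _ fun c hc => ?_
    by_cases hbc : b = c
    · subst hbc; exact le_refl _
    · refine aux_gain_mono P μQ hPnn hPempty hPsum hQ1a hA1ii π hbc ?_
      rw [hbval, piStar, dif_pos hS]
      exact Finset.le_sup' π hc
  · exact Finset.inf'_le _ hbS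

end Aux

/-- For `Δx := Σ_a x_a z_a` built from exact-rate transition vectors `z_a`,
`Δx · g_*[π] = H(x)[π]`. -/
theorem stmt8 {A : Type*} [Fintype A] [DecidableEq A] [Nonempty A]
    (P : A → Finset A → ℝ) (μQ : Measure ℝ) [IsProbabilityMeasure μQ]
    (hPnn : ∀ a A', 0 ≤ P a A')
    (hPsupp : ∀ a A', ¬ A' ⊆ Finset.univ.erase a → P a A' = 0)
    (hPempty : ∀ a, P a (∅ : Finset A) = 0)
    (hPsum : ∀ a, ∑ A' ∈ (Finset.univ.erase a).powerset, P a A' = 1)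
    -- Assumption Q1
    (hQ1a : ∀ q : ℝ, q < 0 → Qfun μQ q = 0)
    (hQ1b : ∀ q : ℝ, 0 < q → 0 < Qfun μQ q)
    -- Assumption A1-i
    (hA1i : ∀ a b : A, b ≠ a →
      0 < ∑ A' ∈ (Finset.univ.erase a).powerset.filter (fun A' => b ∈ A'), P a A')
    -- Assumption A1-ii
    (hA1ii : ∀ a b : A, ∀ S : Finset A, S ⊆ Finset.univ \ {a, b} →
      ∑ A' ∈ (Finset.univ.erase a).powerset.filter (fun A' => (A' ∩ S).Nonempty), P a A'
        = ∑ A' ∈ (Finset.univ.erase b).powerset.filter (fun A' => (A' ∩ S).Nonempty), P b A')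
    (x : A → ℝ) (hx : x ∈ stdSimplex ℝ A) (π : A → ℝ)
    (y : A → Finset A → A → ℝ)
    (hy : ∀ a : A, ∀ A' ∈ (Finset.univ.erase a).powerset, A'.Nonempty →
      y a A' ∈ stdSimplex ℝ A ∧ ∀ b, y a A' b ≠ 0 → b ∈ bStar π A') :
    ∑ b : A,
        (∑ a : A, x a *
          (∑ A' ∈ (Finset.univ.erase a).powerset,
            P a A' * Qfun μQ (piStar π A' - π a) *
              (y a A' b - (if b = a then (1 : ℝ) else 0)))) * gain P μQ π b
      = Hagg P μQ x π := by
  have hae := aux_ae_nonneg μQ hQ1a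
  have hmin : ∀ a : A, ∀ A' ∈ (Finset.univ.erase a).powerset, A'.Nonempty →
      ∑ b : A, y a A' b * gain P μQ π b = gainMin P μQ π A' := by
    intro a A' hA' hne
    obtain ⟨hy1, hy2⟩ := hy a A' hA' hne
    have hgb : ∀ b : A, y a A' b * gain P μQ π b = y a A' b * gainMin P μQ π A' := by
      intro b
      by_cases h : y a A' b = 0
      · rw [h, zero_mul, zero_mul]
      · rw [aux_gain_min P μQ hPnn hPempty hPsum hQ1a hA1ii π hne (hy2 b h)]
    rw [Finset.sum_congr rfl (fun b _ => hgb b), ← Finset.sum_mul, hy1.2, one_mul]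
  have key : ∀ a : A, ∑ A' ∈ (Finset.univ.erase a).powerset,
      P a A' * Qfun μQ (piStar π A' - π a) *
        ((∑ b, y a A' b * gain P μQ π b) - gain P μQ π a)
      = gain2 P μQ π a := by
    intro a
    refine Finset.sum_congr rfl fun A' hA' => ?_
    by_cases hne : A'.Nonempty
    · rw [hmin a A' hA' hne]
    · rw [Finset.not_nonempty_iff_eq_empty.1 hne, hPempty a, zero_mul, zero_mul, zero_mul]
  simp only [Finset.sum_mul]
  rw [Finset.sum_comm, Hagg]
  refine Finset.sum_congr rfl fun a _ => ?_
  rw [← key a, Finset.mul_sum]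
  simp only [mul_assoc]
  rw [← Finset.mul_sum]
  simp only [Finset.sum_mul]
  rw [Finset.sum_comm]
  rw [Finset.mul_sum]
  refine Finset.sum_congr rfl fun A' _ => ?_
  congr 1
  have hδ : gain P μQ π a = ∑ b : A, (if b = a then (1:ℝ) else 0) * gain P μQ π b := by
    simp
  rw [hδ, ← Finset.sum_sub_distrib, Finset.mul_sum, Finset.mul_sum]
  refine Finset.sum_congr rfl fun b _ => ?_
  ring
end
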